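/- Let X = (X₁,…,Xₙ) be a random vector whose components are associated, i.e., Cov(f(X), g(X)) ≥ 0 for all bounded measurable coordinatewise non-decreasing f, g: ℝⁿ → ℝ. Then for all reals c₁,…,cₙ: ℙ(X₁ ≥ c₁,…, Xₙ ≥ cₙ) ≥ ∏_{j=1}^n ℙ(X_j ≥ c_j). -/

import Mathlib

open MeasureTheory

/-- If the components of a random vector `X = (X₁, …, Xₙ)` are associated, i.e.
`Cov(f(X), g(X)) ≥ 0` for all bounded measurable coordinatewise non-decreasing
`f, g`, then `ℙ(X₁ ≥ c₁, …, Xₙ ≥ cₙ) ≥ ∏ⱼ ℙ(Xⱼ ≥ cⱼ)`. -/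
theorem associated_lower_orthant_inequality
    {Ω : Type*} [MeasurableSpace Ω] (P : Measure Ω) [IsProbabilityMeasure P]
    (n : ℕ) (X : Ω → (Fin n → ℝ)) (hX : Measurable X)
    (hassoc : ∀ f g : (Fin n → ℝ) → ℝ, Measurable f → Measurable g →
      (∃ C : ℝ, ∀ x, |f x| ≤ C) → (∃ C : ℝ, ∀ x, |g x| ≤ C) →
      Monotone f → Monotone g →
      0 ≤ (∫ ω, f (X ω) * g (X ω) ∂P) - (∫ ω, f (X ω) ∂P) * (∫ ω, g (X ω) ∂P))
    (c : Fin n → ℝ) :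
    (∏ j : Fin n, P {ω | c j ≤ X ω j}) ≤ P {ω | ∀ j : Fin n, c j ≤ X ω j} := by
  classical
  set S : Finset (Fin n) → Set (Fin n → ℝ) := fun s => {x | ∀ j ∈ s, c j ≤ x j} with hSdef
  have hSmeas : ∀ s : Finset (Fin n), MeasurableSet (S s) := by
    intro s
    have : S s = ⋂ j ∈ s, {x : Fin n → ℝ | c j ≤ x j} := by
      ext x; simp [hSdef]
    rw [this]
    exact MeasurableSet.biInter s.countable_toSet
      (fun j _ => measurableSet_le measurable_const (measurable_pi_apply j))
  have hSupper : ∀ (s : Finset (Fin n)) (x y : Fin n → ℝ), x ≤ y → x ∈ S s → y ∈ S s :=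
    fun s x y hxy hx j hj => (hx j hj).trans (hxy j)
  -- indicator properties
  have hindmeas : ∀ s : Finset (Fin n),
      Measurable ((S s).indicator (fun _ => (1 : ℝ))) :=
    fun s => Measurable.indicator measurable_const (hSmeas s)
  have hindbdd : ∀ s : Finset (Fin n),
      ∃ C : ℝ, ∀ x, |(S s).indicator (fun _ => (1 : ℝ)) x| ≤ C := by
    intro s
    refine ⟨1, fun x => ?_⟩
    by_cases h : x ∈ S s <;> simp [h]
  have hindmono : ∀ s : Finset (Fin n),
      Monotone ((S s).indicator (fun _ => (1 : ℝ))) := by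
    intro s x y hxy
    by_cases hx : x ∈ S s
    · simp [Set.indicator_of_mem, hx, hSupper s x y hxy hx]
    · rw [Set.indicator_of_notMem hx]
      exact Set.indicator_nonneg (fun _ _ => zero_le_one) y
  have hindint : ∀ s : Finset (Fin n),
      ∫ ω, (S s).indicator (fun _ => (1 : ℝ)) (X ω) ∂P = (P (X ⁻¹' S s)).toReal := by
    intro s
    have h1 : (fun ω => (S s).indicator (fun _ => (1 : ℝ)) (X ω))
        = (X ⁻¹' S s).indicator (fun _ => (1 : ℝ)) := by
      ext ω
      by_cases h : X ω ∈ S s <;>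
        simp [Set.indicator_of_mem, Set.indicator_of_notMem, h, Set.mem_preimage]
    rw [h1]
    exact integral_indicator_one (hX (hSmeas s))
  have key : ∀ s : Finset (Fin n),
      (∏ j ∈ s, (P {ω | c j ≤ X ω j}).toReal) ≤ (P (X ⁻¹' S s)).toReal := by
    intro s
    induction s using Finset.induction_on with
    | empty =>
      simp [hSdef, Set.preimage]
    | @insert i t hit ih =>
      have hsplit : S (insert i t) = S {i} ∩ S t := by
        ext x
        simp only [hSdef, Set.mem_setOf_eq, Set.mem_inter_iff, Finset.mem_insert,
          Finset.mem_singleton]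
        constructor
        · intro h
          exact ⟨fun j hj => h j (Or.inl hj), fun j hj => h j (Or.inr hj)⟩
        · rintro ⟨h1, h2⟩ j (rfl | hj)
          · exact h1 j rfl
          · exact h2 j hj
      have hprod : ∀ ω, ((S {i}).indicator (fun _ => (1 : ℝ)) (X ω))
          * ((S t).indicator (fun _ => (1 : ℝ)) (X ω))
          = (S (insert i t)).indicator (fun _ => (1 : ℝ)) (X ω) := by
        intro ω
        rw [hsplit]
        by_cases h1 : X ω ∈ S {i} <;> by_cases h2 : X ω ∈ S t <;>
          simp [Set.indicator_of_mem, Set.indicator_of_notMem, h1, h2, Set.mem_inter_iff]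
      have hcov := hassoc ((S {i}).indicator (fun _ => (1 : ℝ)))
        ((S t).indicator (fun _ => (1 : ℝ))) (hindmeas _) (hindmeas _)
        (hindbdd _) (hindbdd _) (hindmono _) (hindmono _)
      rw [sub_nonneg] at hcov
      have hcov' : (P (X ⁻¹' S {i})).toReal * (P (X ⁻¹' S t)).toReal
          ≤ (P (X ⁻¹' S (insert i t))).toReal := by
        calc (P (X ⁻¹' S {i})).toReal * (P (X ⁻¹' S t)).toReal
            = (∫ ω, (S {i}).indicator (fun _ => (1:ℝ)) (X ω) ∂P)
              * (∫ ω, (S t).indicator (fun _ => (1:ℝ)) (X ω) ∂P) := by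
              rw [hindint, hindint]
          _ ≤ ∫ ω, ((S {i}).indicator (fun _ => (1:ℝ)) (X ω))
              * ((S t).indicator (fun _ => (1:ℝ)) (X ω)) ∂P := hcov
          _ = ∫ ω, (S (insert i t)).indicator (fun _ => (1:ℝ)) (X ω) ∂P := by
              exact integral_congr_ae (Filter.Eventually.of_forall hprod)
          _ = (P (X ⁻¹' S (insert i t))).toReal := hindint _
      have hsingle : X ⁻¹' S {i} = {ω | c i ≤ X ω i} := by
        ext ω; simp [hSdef]
      rw [Finset.prod_insert hit]
      calc (P {ω | c i ≤ X ω i}).toReal * ∏ j ∈ t, (P {ω | c j ≤ X ω j}).toReal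
          ≤ (P {ω | c i ≤ X ω i}).toReal * (P (X ⁻¹' S t)).toReal := by
            exact mul_le_mul_of_nonneg_left ih ENNReal.toReal_nonneg
        _ = (P (X ⁻¹' S {i})).toReal * (P (X ⁻¹' S t)).toReal := by rw [hsingle]
        _ ≤ (P (X ⁻¹' S (insert i t))).toReal := hcov'
  have hfin : ∀ j : Fin n, P {ω | c j ≤ X ω j} ≠ ⊤ := fun j => measure_ne_top P _
  have hkey := key Finset.univ
  have hset : X ⁻¹' S Finset.univ = {ω | ∀ j : Fin n, c j ≤ X ω j} := by
    ext ω; simp [hSdef]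
  rw [hset] at hkey
  rw [← ENNReal.toReal_prod] at hkey
  exact (ENNReal.toReal_le_toReal
    (ENNReal.prod_ne_top (fun j _ => hfin j)) (measure_ne_top P _)).mp hkey
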